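/- arXiv:1411.1334 — 7 statements merged into one kernel-verified Lean document; each statement's English description precedes it below -/
import Mathlib

section
/- For every m ≥ 0, the number of distinct prime factors of d_m is a power of 2; that is, there exists s ∈ ℕ with ω(d_m) = 2^s. -/
/-- `Z a b = a*b / gcd(a,b)^2`. -/
def Zfun (a b : ℕ) : ℕ := a * b / Nat.gcd a b ^ 2

/-- The array: `ent 0 n` is the `n`-th prime (0-indexed), and
`ent (m+1) n = Z (ent m n) (ent m (n+1))`. -/
noncomputable def ent : ℕ → ℕ → ℕ
  | 0, n => Nat.nth Nat.Prime n
  | m + 1, n => Zfun (ent m n) (ent m (n + 1))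

/-- The left edge `d_m`. -/
noncomputable def dseq (m : ℕ) : ℕ := ent m 0

open Finset

/-- Positions of odd entries in row `m` of Pascal's triangle. -/
def Krow (m : ℕ) : Finset ℕ := (range (m + 1)).filter (fun k => Nat.choose m k % 2 = 1)

lemma mem_Krow {m k : ℕ} : k ∈ Krow m ↔ Nat.choose m k % 2 = 1 := by
  simp only [Krow, mem_filter, mem_range]
  constructor
  · tauto
  · intro h
    refine ⟨?_, h⟩
    by_contra hk
    push_neg at hk
    rw [Nat.choose_eq_zero_of_lt (by omega)] at h
    simp at h

lemma Krow_succ (m : ℕ) : Krow (m + 1) = symmDiff (Krow m) ((Krow m).image (· + 1)) := by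
  ext k
  rw [Finset.mem_symmDiff]
  simp only [mem_image, mem_Krow]
  cases k with
  | zero =>
    simp [Nat.choose_zero_right]
  | succ i =>
    have hex : (∃ a, Nat.choose m a % 2 = 1 ∧ a + 1 = i + 1) ↔ Nat.choose m i % 2 = 1 := by
      constructor
      · rintro ⟨a, h1, h2⟩
        obtain rfl : a = i := by omega
        exact h1
      · intro h; exact ⟨i, h, rfl⟩
    rw [Nat.choose_succ_succ, hex]
    simp only [Nat.succ_eq_add_one]
    omega

lemma lucas2 (m k : ℕ) :
    Nat.choose m k % 2 = 1 ↔ Nat.choose (m / 2) (k / 2) % 2 = 1 ∧ k % 2 ≤ m % 2 := by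
  have h : Nat.choose m k ≡ Nat.choose (m % 2) (k % 2) * Nat.choose (m / 2) (k / 2) [MOD 2] :=
    @Choose.choose_modEq_choose_mod_mul_choose_div_nat m k 2 ⟨Nat.prime_two⟩
  unfold Nat.ModEq at h
  have hm := Nat.mod_two_eq_zero_or_one m
  have hk := Nat.mod_two_eq_zero_or_one k
  rcases hm with hm | hm <;> rcases hk with hk | hk <;>
    rw [hm, hk] at h <;>
    simp [Nat.choose, Nat.mul_mod] at h <;>
    omega

lemma card_Krow (m : ℕ) : (Krow m).card = (1 + m % 2) * (Krow (m / 2)).card := by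
  rcases Nat.mod_two_eq_zero_or_one m with hm | hm
  · have hK : Krow m = (Krow (m / 2)).image (fun j => 2 * j) := by
      ext k
      simp only [mem_image, mem_Krow]
      rw [lucas2]
      constructor
      · rintro ⟨h1, h2⟩
        exact ⟨k / 2, h1, by omega⟩
      · rintro ⟨j, hj, rfl⟩
        constructor
        · simpa [Nat.mul_div_cancel_left] using hj
        · omega
    rw [hK, Finset.card_image_of_injective _ (fun a b h => by omega), hm]
    ring
  · have hK : Krow m =
        (Krow (m / 2)).image (fun j => 2 * j) ∪ (Krow (m / 2)).image (fun j => 2 * j + 1) := by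
      ext k
      simp only [mem_union, mem_image, mem_Krow]
      rw [lucas2]
      constructor
      · rintro ⟨h1, _⟩
        rcases Nat.mod_two_eq_zero_or_one k with hk | hk
        · exact Or.inl ⟨k / 2, h1, by omega⟩
        · exact Or.inr ⟨k / 2, h1, by omega⟩
      · rintro (⟨j, hj, rfl⟩ | ⟨j, hj, rfl⟩) <;>
        · constructor
          · have h2 : (2 * j) / 2 = j := by omega
            have h3 : (2 * j + 1) / 2 = j := by omega
            first
              | (rw [h2]; exact hj)
              | (rw [h3]; exact hj)
          · omega
    have hdisj : Disjoint ((Krow (m / 2)).image (fun j => 2 * j))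
        ((Krow (m / 2)).image (fun j => 2 * j + 1)) := by
      rw [Finset.disjoint_left]
      rintro a ha hb
      simp only [mem_image] at ha hb
      obtain ⟨x, -, hx⟩ := ha
      obtain ⟨y, -, hy⟩ := hb
      omega
    rw [hK, Finset.card_union_of_disjoint hdisj,
      Finset.card_image_of_injective _ (fun a b h => by omega),
      Finset.card_image_of_injective _ (fun a b h => by omega), hm]
    ring

lemma card_Krow_pow (m : ℕ) : ∃ s : ℕ, (Krow m).card = 2 ^ s := by
  induction m using Nat.strong_induction_on with
  | _ m ih =>
    rcases Nat.eq_zero_or_pos m with rfl | hm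
    · exact ⟨0, by decide⟩
    · obtain ⟨s, hs⟩ := ih (m / 2) (Nat.div_lt_self hm one_lt_two)
      rw [card_Krow, hs]
      rcases Nat.mod_two_eq_zero_or_one m with h | h <;> rw [h]
      · exact ⟨s, by ring⟩
      · exact ⟨s + 1, by ring⟩

lemma Zfun_prod (S T : Finset ℕ) (hS : ∀ p ∈ S, p.Prime) (hT : ∀ p ∈ T, p.Prime) :
    Zfun (∏ p ∈ S, p) (∏ p ∈ T, p) = ∏ p ∈ symmDiff S T, p := by
  have hSA : (∏ p ∈ S \ T, p) * (∏ p ∈ S ∩ T, p) = ∏ p ∈ S, p := by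
    rw [← Finset.sdiff_inter_self_left S T]
    exact Finset.prod_sdiff Finset.inter_subset_left
  have hTB : (∏ p ∈ T \ S, p) * (∏ p ∈ S ∩ T, p) = ∏ p ∈ T, p := by
    rw [← Finset.sdiff_inter_self_right T S]
    exact Finset.prod_sdiff Finset.inter_subset_right
  have hcop : Nat.Coprime (∏ p ∈ S \ T, p) (∏ p ∈ T \ S, p) := by
    rw [Nat.coprime_prod_left_iff]
    intro p hp
    rw [Nat.coprime_prod_right_iff]
    intro q hq
    have hp' : p ∈ S ∧ p ∉ T := Finset.mem_sdiff.mp hp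
    have hq' : q ∈ T ∧ q ∉ S := Finset.mem_sdiff.mp hq
    refine (Nat.coprime_primes (hS p hp'.1) (hT q hq'.1)).mpr ?_
    rintro rfl
    exact hp'.2 hq'.1
  have hCpos : 0 < ∏ p ∈ S ∩ T, p :=
    Finset.prod_pos fun p hp => (hS p (Finset.mem_of_mem_inter_left hp)).pos
  have hgcd : Nat.gcd (∏ p ∈ S, p) (∏ p ∈ T, p) = ∏ p ∈ S ∩ T, p := by
    rw [← hSA, ← hTB, mul_comm (∏ p ∈ S \ T, p), mul_comm (∏ p ∈ T \ S, p),
      Nat.gcd_mul_left, hcop, mul_one]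
  have hdisj : Disjoint (S \ T) (T \ S) := disjoint_sdiff_sdiff
  rw [Zfun, hgcd, ← hSA, ← hTB]
  have : (∏ p ∈ S \ T, p) * (∏ p ∈ S ∩ T, p) * ((∏ p ∈ T \ S, p) * (∏ p ∈ S ∩ T, p)) =
      (∏ p ∈ S ∩ T, p) ^ 2 * ((∏ p ∈ S \ T, p) * (∏ p ∈ T \ S, p)) := by ring
  rw [this, Nat.mul_div_cancel_left _ (pow_pos hCpos 2), symmDiff_def, Finset.sup_eq_union,
    ← Finset.prod_union hdisj]

lemma nthp_inj : Function.Injective (Nat.nth Nat.Prime) :=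
  Nat.nth_injective Nat.infinite_setOf_prime

lemma shift_inj (n : ℕ) : Function.Injective (fun k => Nat.nth Nat.Prime (n + k)) := by
  intro a b h
  have := nthp_inj h
  omega

lemma ent_eq_prod (m n : ℕ) :
    ent m n = ∏ p ∈ (Krow m).image (fun k => Nat.nth Nat.Prime (n + k)), p := by
  induction m generalizing n with
  | zero =>
    have hK : Krow 0 = {0} := by decide
    simp [ent, hK]
  | succ m ih =>
    have hS : ∀ p ∈ (Krow m).image (fun k => Nat.nth Nat.Prime (n + k)), p.Prime := by
      intro p hp
      obtain ⟨k, -, rfl⟩ := Finset.mem_image.mp hp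
      exact Nat.prime_nth_prime _
    have hT : ∀ p ∈ (Krow m).image (fun k => Nat.nth Nat.Prime (n + 1 + k)), p.Prime := by
      intro p hp
      obtain ⟨k, -, rfl⟩ := Finset.mem_image.mp hp
      exact Nat.prime_nth_prime _
    have h1 : ent (m + 1) n = Zfun (ent m n) (ent m (n + 1)) := rfl
    rw [h1, ih n, ih (n + 1), Zfun_prod _ _ hS hT]
    congr 1
    have hfun : (fun k => Nat.nth Nat.Prime (n + 1 + k)) =
        (fun k => Nat.nth Nat.Prime (n + k)) ∘ (· + 1) := by
      funext k
      simp only [Function.comp]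
      congr 1
      omega
    rw [hfun, ← Finset.image_image, Krow_succ,
      Finset.image_symmDiff _ _ (shift_inj n)]

theorem omega_d_pow_two (m : ℕ) :
    ∃ s : ℕ, (dseq m).primeFactors.card = 2 ^ s := by
  obtain ⟨s, hs⟩ := card_Krow_pow m
  refine ⟨s, ?_⟩
  have hS : ∀ p ∈ (Krow m).image (fun k => Nat.nth Nat.Prime (0 + k)), p.Prime := by
    intro p hp
    obtain ⟨k, -, rfl⟩ := Finset.mem_image.mp hp
    exact Nat.prime_nth_prime _
  rw [dseq, ent_eq_prod, Nat.primeFactors_prod hS,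
    Finset.card_image_of_injective _ (shift_inj 0), hs]
end

section
/- Every entry of the array is squarefree: for all m ≥ 0 and n ≥ 0, a_{m,n} is a squarefree positive integer. -/
lemma Zfun_eq (a b : ℕ) : Zfun a b = (a / Nat.gcd a b) * (b / Nat.gcd a b) := by
  unfold Zfun
  rw [Nat.div_mul_div_comm (Nat.gcd_dvd_left a b) (Nat.gcd_dvd_right a b), sq]

lemma Zfun_good {a b : ℕ} (ha : 0 < a ∧ Squarefree a) (hb : 0 < b ∧ Squarefree b) :
    0 < Zfun a b ∧ Squarefree (Zfun a b) := by
  rw [Zfun_eq]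
  have hg : 0 < Nat.gcd a b := Nat.gcd_pos_of_pos_left b ha.1
  have hda : a / Nat.gcd a b ∣ a := Nat.div_dvd_of_dvd (Nat.gcd_dvd_left a b)
  have hdb : b / Nat.gcd a b ∣ b := Nat.div_dvd_of_dvd (Nat.gcd_dvd_right a b)
  have hcop := Nat.coprime_div_gcd_div_gcd (m := a) (n := b) hg
  constructor
  · exact Nat.mul_pos (Nat.div_pos (Nat.le_of_dvd ha.1 (Nat.gcd_dvd_left a b)) hg)
      (Nat.div_pos (Nat.le_of_dvd hb.1 (Nat.gcd_dvd_right a b)) hg)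
  · exact (Nat.squarefree_mul hcop).mpr ⟨ha.2.squarefree_of_dvd hda, hb.2.squarefree_of_dvd hdb⟩

theorem ent_squarefree (m n : ℕ) : 0 < ent m n ∧ Squarefree (ent m n) := by
  induction m generalizing n with
  | zero =>
    have hp := Nat.prime_nth_prime n
    exact ⟨hp.pos, hp.squarefree⟩
  | succ m ih => exact Zfun_good (ih n) (ih (n + 1))
end

section
/- Let h : ℕ → ℕ be a sequence of positive integers and define η(h) : ℕ → ℕ by η(h)(n) = Z(h(n), h(n+1)); let η^{(m)} denote the m-fold iterate. Let Φ act on sequences f : ℕ → ℕ by Φ(f)(n) = |f(n+1) − f(n)|, with Φ^{(m)} its m-fold iterate. Then for every prime p, every m ≥ 0 and every n ≥ 0, ν_p(η^{(m)}(h)(n)) = Φ^{(m)}(ν_p ∘ h)(n); that is, taking p-adic valuations intertwines the Z-iteration with the iterated absolute difference operator. -/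
/-- The `Z`-evolution operator on sequences of positive integers. -/
def eta (h : ℕ → ℕ) : ℕ → ℕ := fun n => Zfun (h n) (h (n + 1))

/-- The absolute-difference operator on sequences of naturals. -/
def Phi (f : ℕ → ℕ) : ℕ → ℕ := fun n => Nat.dist (f (n + 1)) (f n)

lemma gcd_sq_dvd (a b : ℕ) : Nat.gcd a b ^ 2 ∣ a * b := by
  rw [sq]
  exact mul_dvd_mul (Nat.gcd_dvd_left a b) (Nat.gcd_dvd_right a b)

lemma Zfun_pos {a b : ℕ} (ha : 0 < a) (hb : 0 < b) : 0 < Zfun a b := by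
  apply Nat.div_pos (Nat.le_of_dvd (Nat.mul_pos ha hb) (gcd_sq_dvd a b))
  exact pow_pos (Nat.gcd_pos_of_pos_left b ha) 2

lemma Zfun_fact {a b : ℕ} (ha : 0 < a) (hb : 0 < b) (p : ℕ) :
    (Zfun a b).factorization p = Nat.dist (a.factorization p) (b.factorization p) := by
  have hd := gcd_sq_dvd a b
  rw [Zfun, Nat.factorization_div hd, Finsupp.coe_tsub, Pi.sub_apply,
    Nat.factorization_mul ha.ne' hb.ne', Nat.factorization_pow,
    Nat.factorization_gcd ha.ne' hb.ne']
  simp only [Finsupp.coe_add, Pi.add_apply, Finsupp.smul_apply, Finsupp.inf_apply,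
    smul_eq_mul, Nat.dist]
  omega

lemma eta_pos {h : ℕ → ℕ} (hpos : ∀ n, 0 < h n) : ∀ n, 0 < eta h n :=
  fun n => Zfun_pos (hpos n) (hpos (n + 1))

theorem valuation_intertwines (h : ℕ → ℕ) (hpos : ∀ n, 0 < h n)
    (p : ℕ) (hp : p.Prime) (m n : ℕ) :
    ((eta^[m] h) n).factorization p =
      (Phi^[m] (fun j => (h j).factorization p)) n := by
  induction m generalizing h n with
  | zero => rfl
  | succ m ih =>
    rw [Function.iterate_succ_apply, Function.iterate_succ_apply,
      ih (eta h) (eta_pos hpos) n]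
    have : (fun j => (eta h j).factorization p) = Phi (fun j => (h j).factorization p) := by
      funext j
      simpa [eta, Phi, Nat.dist_comm] using Zfun_fact (hpos j) (hpos (j + 1)) p
    rw [this]
end

section
/- For all k ≥ 0 and n ≥ 0, ψ^{(n)}(w_k)(n) = 1 if the binomial coefficient C(n,k) is odd, and ψ^{(n)}(w_k)(n) = 0 if C(n,k) is even. -/
/-- The difference operator keeping the first term: `psi w 0 = w 0`,
`psi w (n+1) = w n + w (n + 1)` (in `F_2`, sum equals difference). -/
def psi (w : ℕ → ZMod 2) : ℕ → ZMod 2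
  | 0 => w 0
  | n + 1 => w n + w (n + 1)


/-- The indicator sequence of `k`. -/
def wk (k : ℕ) : ℕ → ZMod 2 := fun n => if n = k then 1 else 0

lemma psi_iter_formula (w : ℕ → ZMod 2) : ∀ m n, psi^[m] w n =
    ∑ j ∈ Finset.range (n + 1), (Nat.choose m (n - j) : ZMod 2) * w j := by
  intro m
  induction m with
  | zero =>
    intro n
    simp only [Function.iterate_zero, id]
    have h : ∀ b ∈ Finset.range (n + 1), b ≠ n →
        (Nat.choose 0 (n - b) : ZMod 2) * w b = 0 := by
      intro b hb hbn
      have : 0 < n - b := by have := Finset.mem_range.mp hb; omega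
      rw [show n - b = (n - b - 1) + 1 by omega]
      simp
    rw [Finset.sum_eq_single_of_mem n (Finset.self_mem_range_succ n) h]
    simp
  | succ m ih =>
    intro n
    rw [Function.iterate_succ_apply']
    cases n with
    | zero => simpa [psi] using ih 0
    | succ n =>
      show psi^[m] w n + psi^[m] w (n + 1) = _
      rw [ih n, ih (n + 1),
        Finset.sum_range_succ (f := fun j => ((m + 1).choose (n + 1 - j) : ZMod 2) * w j),
        Finset.sum_range_succ (f := fun j => (m.choose (n + 1 - j) : ZMod 2) * w j)]
      simp only [Nat.sub_self, Nat.choose_zero_right, Nat.cast_one, one_mul]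
      rw [← add_assoc, ← Finset.sum_add_distrib]
      congr 1
      apply Finset.sum_congr rfl
      intro j hj
      have hjn : j ≤ n := by have := Finset.mem_range.mp hj; omega
      rw [show n + 1 - j = (n - j) + 1 by omega, Nat.choose_succ_succ']
      push_cast
      ring

theorem psi_iterate_diag (k n : ℕ) :
    psi^[n] (wk k) n = if Odd (Nat.choose n k) then 1 else 0 := by
  rw [psi_iter_formula]
  by_cases hk : k ≤ n
  · have hsum : ∑ j ∈ Finset.range (n + 1), (Nat.choose n (n - j) : ZMod 2) * wk k j
        = (Nat.choose n (n - k) : ZMod 2) := by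
      rw [Finset.sum_eq_single_of_mem k (Finset.mem_range.mpr (by omega))]
      · simp [wk]
      · intro b _ hbk
        simp [wk, hbk]
    rw [hsum, Nat.choose_symm hk]
    rcases Nat.even_or_odd (n.choose k) with h | h
    · rw [if_neg (by simpa [Nat.not_odd_iff_even] using h)]
      obtain ⟨r, hr⟩ := h
      rw [hr]
      push_cast
      exact CharTwo.add_self_eq_zero _
    · rw [if_pos h]
      obtain ⟨r, hr⟩ := h
      rw [hr]
      push_cast
      rw [show (2 : ZMod 2) = 0 from rfl]
      ring
  · rw [Nat.choose_eq_zero_of_lt (by omega), if_neg (by decide)]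
    apply Finset.sum_eq_zero
    intro j hj
    have : j ≠ k := by have := Finset.mem_range.mp hj; omega
    simp [wk, this]
end

section
/- (Proposition 3) For all k ≥ 0 and m ≥ 0, the set { n : ψ^{(m)}(w_k)(n) ≠ 0 } is finite and its cardinality is a power of 2. -/
lemma psi_iterate_wk (k m n : ℕ) :
    psi^[m] (wk k) n = if k ≤ n then ((Nat.choose m (n - k) : ℕ) : ZMod 2) else 0 := by
  induction m generalizing n with
  | zero =>
    simp only [Function.iterate_zero, id_eq, wk]
    rcases lt_trichotomy n k with h | h | h
    · rw [if_neg h.ne, if_neg (not_le.mpr h)]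
    · subst h; simp
    · rw [if_neg h.ne', if_pos h.le, Nat.choose_eq_zero_of_lt (by omega)]
      simp
  | succ m ih =>
    rw [Function.iterate_succ_apply']
    cases n with
    | zero =>
      show psi^[m] (wk k) 0 = _
      rw [ih 0]
      rcases Nat.eq_zero_or_pos k with hk | hk
      · subst hk; simp
      · rw [if_neg (by omega), if_neg (by omega)]
    | succ n =>
      show psi^[m] (wk k) n + psi^[m] (wk k) (n + 1) = _
      rw [ih n, ih (n + 1)]
      rcases lt_trichotomy k (n + 1) with h | h | h
      · have hkn : k ≤ n := by omega
        rw [if_pos hkn, if_pos (by omega), if_pos (by omega)]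
        have h1 : n + 1 - k = (n - k) + 1 := by omega
        rw [h1, Nat.choose_succ_succ]
        push_cast
        ring
      · rw [if_neg (by omega), if_pos (by omega), if_pos (by omega)]
        have h1 : n + 1 - k = 0 := by omega
        rw [h1]
        simp
      · rw [if_neg (by omega), if_neg (by omega), if_neg (by omega)]
        simp

/-- The set of positions of odd entries in row `m` of Pascal's triangle. -/
def oddRow (m : ℕ) : Finset ℕ :=
  (Finset.range (m + 1)).filter (fun j => Nat.choose m j % 2 = 1)

lemma mem_oddRow {m j : ℕ} : j ∈ oddRow m ↔ Nat.choose m j % 2 = 1 := by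
  constructor
  · intro h
    exact (Finset.mem_filter.mp h).2
  · intro h
    refine Finset.mem_filter.mpr ⟨Finset.mem_range.mpr ?_, h⟩
    by_contra hj
    rw [Nat.choose_eq_zero_of_lt (by omega)] at h
    simp at h

lemma lucas_two (m j : ℕ) :
    Nat.choose m j % 2 = 1 ↔
      Nat.choose (m % 2) (j % 2) % 2 = 1 ∧ Nat.choose (m / 2) (j / 2) % 2 = 1 := by
  haveI : Fact (Nat.Prime 2) := ⟨Nat.prime_two⟩
  have h := (Choose.choose_modEq_choose_mod_mul_choose_div_nat (p := 2) (n := m) (k := j))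
  have h2 : Nat.choose m j % 2 =
      (Nat.choose (m % 2) (j % 2) * Nat.choose (m / 2) (j / 2)) % 2 := h
  rw [h2, Nat.mul_mod]
  rcases Nat.mod_two_eq_zero_or_one (Nat.choose (m % 2) (j % 2)) with h3 | h3 <;>
    rcases Nat.mod_two_eq_zero_or_one (Nat.choose (m / 2) (j / 2)) with h4 | h4 <;>
    simp [h3, h4]

lemma card_oddRow_mul (m : ℕ) :
    (oddRow m).card = (oddRow (m % 2)).card * (oddRow (m / 2)).card := by
  rw [← Finset.card_product]
  refine Finset.card_bij' (fun j _ => (j % 2, j / 2)) (fun p _ => p.1 + 2 * p.2) ?_ ?_ ?_ ?_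
  · intro j hj
    rw [mem_oddRow, lucas_two] at hj
    exact Finset.mem_product.mpr ⟨mem_oddRow.mpr hj.1, mem_oddRow.mpr hj.2⟩
  · intro p hp
    rw [Finset.mem_product, mem_oddRow, mem_oddRow] at hp
    have hp1 : p.1 ≤ m % 2 := by
      by_contra h
      rw [Nat.choose_eq_zero_of_lt (by omega)] at hp
      simp at hp
    have hlt : p.1 < 2 := by omega
    rw [mem_oddRow, lucas_two]
    constructor
    · rw [Nat.add_mul_mod_self_left, Nat.mod_eq_of_lt hlt]
      exact hp.1
    · rw [Nat.add_mul_div_left _ _ (by norm_num : 0 < 2), Nat.div_eq_of_lt hlt, Nat.zero_add]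
      exact hp.2
  · intro j _
    show j % 2 + 2 * (j / 2) = j
    omega
  · intro p hp
    rw [Finset.mem_product, mem_oddRow, mem_oddRow] at hp
    have hp1 : p.1 ≤ m % 2 := by
      by_contra h
      rw [Nat.choose_eq_zero_of_lt (by omega)] at hp
      simp at hp
    have hlt : p.1 < 2 := by omega
    have h1 : (p.1 + 2 * p.2) % 2 = p.1 := by omega
    have h2 : (p.1 + 2 * p.2) / 2 = p.2 := by omega
    exact Prod.ext h1 h2

lemma card_oddRow_pow (m : ℕ) : ∃ s : ℕ, (oddRow m).card = 2 ^ s := by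
  induction m using Nat.strong_induction_on with
  | _ m ih =>
    match m with
    | 0 => exact ⟨0, by decide⟩
    | 1 => exact ⟨1, by decide⟩
    | (m + 2) =>
      obtain ⟨a, ha⟩ := ih ((m + 2) % 2) (by omega)
      obtain ⟨b, hb⟩ := ih ((m + 2) / 2) (by omega)
      exact ⟨a + b, by rw [card_oddRow_mul (m + 2), ha, hb, pow_add]⟩

theorem support_card_pow_two (k m : ℕ) :
    {n : ℕ | psi^[m] (wk k) n ≠ 0}.Finite ∧
      ∃ s : ℕ, Nat.card {n : ℕ | psi^[m] (wk k) n ≠ 0} = 2 ^ s := by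
  have hset : {n : ℕ | psi^[m] (wk k) n ≠ 0} = ↑((oddRow m).image (· + k)) := by
    ext n
    simp only [Set.mem_setOf_eq, Finset.coe_image, Set.mem_image, Finset.mem_coe]
    rw [psi_iterate_wk]
    constructor
    · intro h
      have hk : k ≤ n := by
        by_contra hk
        rw [if_neg hk] at h
        exact h rfl
      rw [if_pos hk] at h
      refine ⟨n - k, mem_oddRow.mpr ?_, by omega⟩
      have := (ZMod.natCast_eq_zero_iff (Nat.choose m (n - k)) 2).not.mp h
      omega
    · rintro ⟨j, hj, rfl⟩
      rw [mem_oddRow] at hj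
      rw [if_pos (by omega)]
      have hjk : j + k - k = j := by omega
      rw [hjk]
      intro hc
      have := (ZMod.natCast_eq_zero_iff (Nat.choose m j) 2).mp hc
      omega
  rw [hset]
  refine ⟨Finset.finite_toSet _, ?_⟩
  obtain ⟨s, hs⟩ := card_oddRow_pow m
  refine ⟨s, ?_⟩
  rw [Nat.card_coe_set_eq, Set.ncard_coe_finset,
    Finset.card_image_of_injective _ (add_left_injective k), hs]
end

section
/- (Corollary 4) For every k ≥ 0, the least positive integer m such that φ^{(m)}(w_k) = w_k equals L_k, where L_k is the smallest power of 2 strictly greater than k; that is, L_k belongs to the set { m > 0 : φ^{(m)}(w_k) = w_k } and is a lower bound for it. -/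
/-- The difference operator: `phi w n = w n + w (n+1)` (in `F_2`, sum equals
 absolute difference). -/
def phi (w : ℕ → ZMod 2) : ℕ → ZMod 2 := fun n => w n + w (n + 1)


/-- `L k`: the smallest power of `2` strictly greater than `k`. -/
noncomputable def L (k : ℕ) : ℕ := sInf {m : ℕ | (∃ s : ℕ, m = 2 ^ s) ∧ k < m}

lemma phi_iter_formula (m : ℕ) (w : ℕ → ZMod 2) (n : ℕ) :
    phi^[m] w n = ∑ i ∈ Finset.range (m + 1), (m.choose i : ZMod 2) * w (n + i) := by
  induction m generalizing w n with
  | zero => simp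
  | succ m ih =>
    rw [Function.iterate_succ_apply, ih]
    have h1 : ∀ i, phi w (n + i) = w (n + i) + w (n + i + 1) := fun i => rfl
    simp only [h1, mul_add]
    rw [Finset.sum_add_distrib]
    have hA : ∑ i ∈ Finset.range (m + 1), (m.choose i : ZMod 2) * w (n + i)
        = ∑ i ∈ Finset.range (m + 2), (m.choose i : ZMod 2) * w (n + i) := by
      rw [Finset.sum_range_succ (n := m + 1)]
      simp [Nat.choose_succ_self]
    have hB : ∑ i ∈ Finset.range (m + 1), (m.choose i : ZMod 2) * w (n + i + 1)
        = ∑ i ∈ Finset.range (m + 2),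
            (if i = 0 then (0 : ZMod 2) else (m.choose (i - 1) : ZMod 2)) * w (n + i) := by
      rw [Finset.sum_range_succ' (n := m + 1)]
      simp [add_assoc, add_comm 1]
    rw [hA, hB, ← Finset.sum_add_distrib]
    apply Finset.sum_congr rfl
    intro i _
    rcases i with _ | i
    · simp
    · rw [← add_mul]
      congr 1
      simp [Nat.choose_succ_succ, Nat.cast_add, add_comm]

lemma phi_iter_wk (m k n : ℕ) :
    phi^[m] (wk k) n =
      if n ≤ k ∧ k ≤ n + m then ((m.choose (k - n) : ZMod 2)) else 0 := by
  rw [phi_iter_formula]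
  by_cases hnk : n ≤ k
  · have key : ∀ i, (m.choose i : ZMod 2) * wk k (n + i)
        = if i = k - n then (m.choose i : ZMod 2) else 0 := by
      intro i
      unfold wk
      by_cases h : n + i = k
      · have : i = k - n := by omega
        subst this
        simp [h, (by omega : n + (k - n) = k)]
      · have : i ≠ k - n := by omega
        simp [h, this]
    simp only [key]
    rw [Finset.sum_ite_eq' (Finset.range (m + 1))]
    simp only [Finset.mem_range]
    have : k - n < m + 1 ↔ k ≤ n + m := by omega
    rw [if_congr this rfl rfl]
    simp [hnk]
  · have : ∀ i ∈ Finset.range (m+1), (m.choose i : ZMod 2) * wk k (n + i) = 0 := by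
      intro i _
      unfold wk
      have : n + i ≠ k := by omega
      simp [this]
    rw [Finset.sum_eq_zero this]
    simp [hnk]

lemma choose_pow_cast (t a : ℕ) (ha : a ≠ 0) (ha' : a ≠ 2 ^ t) :
    ((2 ^ t).choose a : ZMod 2) = 0 := by
  rw [ZMod.natCast_eq_zero_iff]
  exact Nat.Prime.dvd_choose_pow Nat.prime_two ha ha'

lemma L_mem (k : ℕ) : (∃ s : ℕ, L k = 2 ^ s) ∧ k < L k := by
  have hne : {m : ℕ | (∃ s : ℕ, m = 2 ^ s) ∧ k < m}.Nonempty :=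
    ⟨2 ^ k, ⟨k, rfl⟩, (Nat.lt_two_pow_self (n := k))⟩
  exact Nat.sInf_mem hne

theorem least_period (k : ℕ) :
    phi^[L k] (wk k) = wk k ∧
      ∀ m : ℕ, 0 < m → phi^[m] (wk k) = wk k → L k ≤ m := by
  obtain ⟨⟨s, hs⟩, hkL⟩ := L_mem k
  constructor
  · funext n
    rw [phi_iter_wk]
    by_cases hnk : n ≤ k
    · have h2 : k ≤ n + L k := by omega
      rw [if_pos ⟨hnk, h2⟩]
      by_cases hnk' : n = k
      · simp [hnk', wk]
      · have h0 : k - n ≠ 0 := by omega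
        have h1 : k - n ≠ 2 ^ s := by omega
        rw [hs, choose_pow_cast s _ h0 h1]
        simp [wk, hnk']
    · have : ¬(n ≤ k ∧ k ≤ n + L k) := by omega
      rw [if_neg this]
      simp only [wk]
      rw [if_neg (by omega : ¬ n = k)]
  · intro m hm heq
    by_contra hlt
    push_neg at hlt
    have hval : ∀ n, phi^[m] (wk k) n = wk k n := fun n => by rw [heq]
    by_cases hmk : m ≤ k
    · have := hval (k - m)
      rw [phi_iter_wk] at this
      have hc : k - m ≤ k ∧ k ≤ k - m + m := by omega
      rw [if_pos hc, (by omega : k - (k - m) = m), Nat.choose_self, Nat.cast_one] at this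
      have hne : ¬ k - m = k := by omega
      simp only [wk, if_neg hne] at this
      exact one_ne_zero this
    · push_neg at hmk
      set t := Nat.log 2 m with ht
      have h2t : 2 ^ t ≤ m := Nat.pow_log_le_self 2 (by omega)
      have h2t' : m < 2 ^ (t + 1) := Nat.lt_pow_succ_log_self (by norm_num) m
      have htk : 2 ^ t ≤ k := by
        by_contra h
        push_neg at h
        have : L k ≤ 2 ^ t := Nat.sInf_le ⟨⟨t, rfl⟩, h⟩
        omega
      set j := m - 2 ^ t with hj
      have hj0 : j ≠ 0 := by omega
      have hjt : j < 2 ^ t := by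
        have : 2 ^ (t + 1) = 2 ^ t + 2 ^ t := by ring
        omega
      have hjk : j ≤ k := by omega
      have := hval (k - j)
      rw [phi_iter_wk] at this
      have hc : k - j ≤ k ∧ k ≤ k - j + m := by omega
      rw [if_pos hc, (by omega : k - (k - j) = j)] at this
      have hcast : ((m.choose j : ℕ) : ZMod 2) = 1 := by
        have hmeq : m = 2 ^ t + j := by omega
        rw [hmeq, Nat.add_choose_eq]
        push_cast
        rw [Finset.sum_eq_single ((0 : ℕ), j)]
        · simp
        · rintro ⟨a, b⟩ hab hne
          rw [Finset.HasAntidiagonal.mem_antidiagonal] at hab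
          simp only [] at hab
          have ha : a ≠ 0 := by
            intro h0; apply hne; simp only [Prod.mk.injEq]; omega
          have ha' : a ≠ 2 ^ t := by
            intro h0
            have : a ≤ j := by omega
            omega
          rw [choose_pow_cast t a ha ha']
          ring
        · intro h
          exact absurd (Finset.HasAntidiagonal.mem_antidiagonal.2 (by simp)) h
      rw [hcast] at this
      have hne : ¬ k - j = k := by omega
      simp only [wk, if_neg hne] at this
      exact one_ne_zero this
end

section
/- For every m ≥ 0, ω(d_m) = 2^{s_2(m)}, where s_2(m) is the number of 1's in the binary expansion of m; equivalently, the quantity δ_m = log_2(ω(d_m)) equals the binary digit sum of m. -/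
open Finset
open scoped symmDiff

/-! ### Counting odd binomial coefficients -/

/-- Indices `k` with `C(m,k)` odd. -/
def Tset (m : ℕ) : Finset ℕ := (range (m + 1)).filter (fun k => m.choose k % 2 = 1)

lemma mem_Tset {m k : ℕ} : k ∈ Tset m ↔ m.choose k % 2 = 1 := by
  constructor
  · intro h; exact (mem_filter.mp h).2
  · intro h
    refine mem_filter.mpr ⟨mem_range.mpr ?_, h⟩
    by_contra hk
    rw [Nat.choose_eq_zero_of_lt (by omega)] at h
    omega

/-- Key parity lemma from Lucas' theorem (p = 2). -/
lemma choose_mod_two (n k : ℕ) :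
    n.choose k % 2 = 1 ↔ ((n / 2).choose (k / 2) % 2 = 1 ∧ ¬(n % 2 = 0 ∧ k % 2 = 1)) := by
  haveI : Fact (Nat.Prime 2) := ⟨Nat.prime_two⟩
  have h := Choose.choose_modEq_choose_mod_mul_choose_div_nat (p := 2) (n := n) (k := k)
  unfold Nat.ModEq at h
  rw [h, Nat.mul_mod]
  rcases Nat.mod_two_eq_zero_or_one n with hn | hn <;>
    rcases Nat.mod_two_eq_zero_or_one k with hk | hk <;>
      rw [hn, hk] <;> norm_num <;> omega

lemma card_Tset (m : ℕ) : (Tset m).card = 2 ^ (Nat.digits 2 m).sum := by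
  induction m using Nat.strong_induction_on with
  | _ m ih =>
    rcases Nat.eq_zero_or_pos m with hm | hm
    · subst hm
      have : Tset 0 = {0} := rfl
      simp [this]
    have hdig : Nat.digits 2 m = m % 2 :: Nat.digits 2 (m / 2) :=
      Nat.digits_def' (by norm_num) hm
    have hq := ih (m / 2) (Nat.div_lt_self hm (by norm_num))
    rcases Nat.mod_two_eq_zero_or_one m with hr | hr
    · -- even case
      have hT : Tset m = (Tset (m / 2)).image (fun j => 2 * j) := by
        ext k
        simp only [mem_Tset, mem_image, choose_mod_two m k, hr]
        constructor
        · rintro ⟨h1, h2⟩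
          have hk2 : k % 2 ≠ 1 := by tauto
          exact ⟨k / 2, h1, by omega⟩
        · rintro ⟨j, hj, rfl⟩
          have hjj : 2 * j / 2 = j := by omega
          rw [hjj]
          exact ⟨hj, by omega⟩
      rw [hT, card_image_of_injective _ (fun a b h => by omega), hq, hdig, hr]
      simp
    · -- odd case
      have hT : Tset m = (Tset (m / 2)).image (fun j => 2 * j) ∪
          (Tset (m / 2)).image (fun j => 2 * j + 1) := by
        ext k
        simp only [mem_Tset, mem_union, mem_image, choose_mod_two m k, hr]
        constructor
        · rintro ⟨h1, -⟩
          rcases Nat.mod_two_eq_zero_or_one k with hk | hk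
          · exact Or.inl ⟨k / 2, h1, by omega⟩
          · exact Or.inr ⟨k / 2, h1, by omega⟩
        · rintro (⟨j, hj, rfl⟩ | ⟨j, hj, rfl⟩)
          · have hjj : 2 * j / 2 = j := by omega
            rw [hjj]; exact ⟨hj, by omega⟩
          · have hjj : (2 * j + 1) / 2 = j := by omega
            rw [hjj]; exact ⟨hj, by omega⟩
      have hdisj : Disjoint ((Tset (m / 2)).image (fun j => 2 * j))
          ((Tset (m / 2)).image (fun j => 2 * j + 1)) := by
        simp only [disjoint_left, mem_image]
        rintro a ⟨j, -, rfl⟩ ⟨j', -, h⟩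
        omega
      rw [hT, card_union_of_disjoint hdisj,
        card_image_of_injective _ (fun a b h => by omega),
        card_image_of_injective _ (fun a b h => by omega), hq, hdig, hr]
      rw [List.sum_cons, pow_add, pow_one, two_mul]

/-! ### Products of distinct primes -/

/-- Product of the primes indexed by a finset. -/
noncomputable def Pprod (s : Finset ℕ) : ℕ := ∏ k ∈ s, Nat.nth Nat.Prime k

lemma Pprod_pos (s : Finset ℕ) : 0 < Pprod s :=
  Finset.prod_pos fun k _ => (Nat.prime_nth_prime k).pos

lemma Pprod_union {s t : Finset ℕ} (h : Disjoint s t) :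
    Pprod (s ∪ t) = Pprod s * Pprod t := Finset.prod_union h

lemma Pprod_coprime {s t : Finset ℕ} (h : Disjoint s t) :
    Nat.Coprime (Pprod s) (Pprod t) := by
  apply Nat.Coprime.prod_left
  intro i hi
  apply Nat.Coprime.prod_right
  intro j hj
  rw [Nat.coprime_primes (Nat.prime_nth_prime i) (Nat.prime_nth_prime j)]
  intro hij
  have hij' : i = j := Nat.nth_injective Nat.infinite_setOf_prime hij
  exact (Finset.disjoint_left.mp h hi) (hij' ▸ hj)

lemma Zfun_Pprod (s t : Finset ℕ) : Zfun (Pprod s) (Pprod t) = Pprod (s ∆ t) := by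
  have e1 : (s ∩ t) ∪ (s \ t) = s := by
    ext a; simp only [mem_union, mem_inter, mem_sdiff]; tauto
  have e2 : (s ∩ t) ∪ (t \ s) = t := by
    ext a; simp only [mem_union, mem_inter, mem_sdiff]; tauto
  have e3 : (s \ t) ∪ (t \ s) = s ∆ t := by
    ext a; simp only [mem_union, mem_sdiff, Finset.mem_symmDiff]
  have d1 : Disjoint (s ∩ t) (s \ t) := by
    simp only [disjoint_left, mem_inter, mem_sdiff]; tauto
  have d2 : Disjoint (s ∩ t) (t \ s) := by
    simp only [disjoint_left, mem_inter, mem_sdiff]; tauto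
  have d3 : Disjoint (s \ t) (t \ s) := by
    simp only [disjoint_left, mem_sdiff]; tauto
  have hs : Pprod s = Pprod (s ∩ t) * Pprod (s \ t) := by rw [← Pprod_union d1, e1]
  have ht : Pprod t = Pprod (s ∩ t) * Pprod (t \ s) := by rw [← Pprod_union d2, e2]
  have hsd : Pprod (s ∆ t) = Pprod (s \ t) * Pprod (t \ s) := by rw [← Pprod_union d3, e3]
  have hbc : Nat.Coprime (Pprod (s \ t)) (Pprod (t \ s)) := Pprod_coprime d3
  have hgcd : Nat.gcd (Pprod s) (Pprod t) = Pprod (s ∩ t) := by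
    rw [hs, ht, Nat.gcd_mul_left, hbc, mul_one]
  rw [Zfun, hgcd, hs, ht, hsd]
  rw [show Pprod (s ∩ t) * Pprod (s \ t) * (Pprod (s ∩ t) * Pprod (t \ s))
      = Pprod (s ∩ t) ^ 2 * (Pprod (s \ t) * Pprod (t \ s)) by ring]
  exact Nat.mul_div_cancel_left _ (pow_pos (Pprod_pos _) 2)

/-! ### The index-set recursion -/

def fset : ℕ → ℕ → Finset ℕ
  | 0, n => {n}
  | m + 1, n => fset m n ∆ fset m (n + 1)

lemma ent_eq_Pprod (m n : ℕ) : ent m n = Pprod (fset m n) := by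
  induction m generalizing n with
  | zero => simp [ent, fset, Pprod]
  | succ m ih => rw [ent, fset, ih, ih, Zfun_Pprod]

lemma mem_fset {m n x : ℕ} : x ∈ fset m n ↔ n ≤ x ∧ m.choose (x - n) % 2 = 1 := by
  induction m generalizing n x with
  | zero =>
    simp only [fset, mem_singleton]
    constructor
    · rintro rfl; simp
    · rintro ⟨h1, h2⟩
      rcases Nat.lt_or_ge n x with h | h
      · rw [Nat.choose_eq_zero_of_lt (by omega)] at h2; omega
      · omega
  | succ m ih =>
    rw [show fset (m + 1) n = fset m n ∆ fset m (n + 1) from rfl,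
      Finset.mem_symmDiff, ih, ih]
    rcases Nat.lt_or_ge x n with h | h
    · constructor
      · rintro (⟨⟨h1, -⟩, -⟩ | ⟨⟨h1, -⟩, -⟩) <;> omega
      · rintro ⟨h1, -⟩; omega
    rcases Nat.eq_or_lt_of_le h with rfl | h'
    · simp
    · -- x ≥ n + 1
      have hx : x - n = (x - (n + 1)) + 1 := by omega
      rw [hx, Nat.choose_succ_succ]
      have h1 : n ≤ x := h
      have h2 : n + 1 ≤ x := h'
      generalize m.choose (x - (n + 1)) = a
      generalize m.choose (x - (n + 1) + 1) = b
      omega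

lemma fset_zero_eq (m : ℕ) : fset m 0 = Tset m := by
  ext x
  rw [mem_fset, mem_Tset]
  simp

lemma primeFactors_Pprod (s : Finset ℕ) :
    (Pprod s).primeFactors = s.image (Nat.nth Nat.Prime) := by
  have h : ∏ p ∈ s.image (Nat.nth Nat.Prime), p = ∏ k ∈ s, Nat.nth Nat.Prime k :=
    Finset.prod_image (fun i _ j _ h => Nat.nth_injective Nat.infinite_setOf_prime h)
  rw [Pprod, ← h, Nat.primeFactors_prod]
  intro p hp
  obtain ⟨k, -, rfl⟩ := Finset.mem_image.mp hp
  exact Nat.prime_nth_prime k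

theorem omega_d_eq_pow_binary_digit_sum (m : ℕ) :
    (dseq m).primeFactors.card = 2 ^ (Nat.digits 2 m).sum := by
  rw [dseq, ent_eq_Pprod, fset_zero_eq, ← card_Tset m, primeFactors_Pprod]
  exact Finset.card_image_of_injective _ (Nat.nth_injective Nat.infinite_setOf_prime)
end
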